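/- Let e : [0,T] × D → ℝ be C² in time with e(0,x) = 0, ė(0,x) = 0, e(t,·) = 0 on the boundary, and suppose ρ ë(t,x) = 𝔽 e_{xx}(t,x) + F(t,x) with sup_{(x,t)} |F(t,x)| ≤ C₃ε. Then the energy E(t) = (1/2)∫_D ρ|ė(t,x)|² dx + (1/2)∫_D 𝔽|e_x(t,x)|² dx satisfies E'(t) = ∫_D F·ė dx ≤ C₃ε√(|D|)·√(2E(t)/ρ), and consequently by Gronwall's inequality sup_{t∈[0,T]} E(t) ≤ C₂ε² for a constant C₂ depending only on C₃, ρ, |D|, and T. -/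

import Mathlib

set_option maxHeartbeats 1000000

open Set MeasureTheory Metric

private lemma hd_eq_zero_left {f : ℝ → ℝ} {d c t : ℝ} (h : HasDerivAt f d t) (hc : c < t)
    (hf : ∀ s ∈ Set.Icc c t, f s = 0) : d = 0 := by
  have h1 : HasDerivWithinAt f d (Set.Iic t) t := h.hasDerivWithinAt
  have h2 : HasDerivWithinAt f 0 (Set.Iic t) t := by
    apply (hasDerivWithinAt_const t _ (0:ℝ)).congr_of_eventuallyEq
    · filter_upwards [Ioc_mem_nhdsLE hc] with s hs
      exact hf s ⟨hs.1.le, hs.2⟩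
    · exact hf t ⟨hc.le, le_rfl⟩
  exact uniqueDiffOn_Iic t t Set.self_mem_Iic |>.eq_deriv _ h1 h2

private lemma hd_eq_zero_right {f : ℝ → ℝ} {d c t : ℝ} (h : HasDerivAt f d t) (hc : t < c)
    (hf : ∀ s ∈ Set.Icc t c, f s = 0) : d = 0 := by
  have h1 : HasDerivWithinAt f d (Set.Ici t) t := h.hasDerivWithinAt
  have h2 : HasDerivWithinAt f 0 (Set.Ici t) t := by
    apply (hasDerivWithinAt_const t _ (0:ℝ)).congr_of_eventuallyEq
    · filter_upwards [Ico_mem_nhdsGE hc] with s hs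
      exact hf s ⟨hs.1, hs.2.le⟩
    · exact hf t ⟨le_rfl, hc.le⟩
  exact uniqueDiffOn_Ici t t Set.self_mem_Ici |>.eq_deriv _ h1 h2

private lemma slice_t {P : ℝ × ℝ → ℝ} (hP : Differentiable ℝ P) (t x : ℝ) :
    HasDerivAt (fun s => P (s, x)) (fderiv ℝ P (t, x) (1, 0)) t := by
  have h := (hP (t, x)).hasFDerivAt.comp_hasDerivAt t
    ((hasDerivAt_id t).prodMk (hasDerivAt_const t x))
  exact h

private lemma slice_x {P : ℝ × ℝ → ℝ} (hP : Differentiable ℝ P) (t x : ℝ) :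
    HasDerivAt (fun y => P (t, y)) (fderiv ℝ P (t, x) (0, 1)) x := by
  have h := (hP (t, x)).hasFDerivAt.comp_hasDerivAt x
    ((hasDerivAt_const x t).prodMk (hasDerivAt_id x))
  exact h

private lemma leibniz {g g1 : ℝ × ℝ → ℝ} (hg : Continuous g) (hg1 : Continuous g1)
    (hd : ∀ p : ℝ × ℝ, HasDerivAt (fun s => g (s, p.2)) (g1 p) p.1)
    (a b t : ℝ) :
    HasDerivAt (fun s => ∫ x in a..b, g (s, x)) (∫ x in a..b, g1 (t, x)) t := by
  obtain ⟨M, hM⟩ := (isCompact_closedBall t 1 |>.prod isCompact_uIcc).exists_bound_of_continuousOn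
    hg1.continuousOn
  have H := intervalIntegral.hasDerivAt_integral_of_dominated_loc_of_deriv_le
    (F := fun s x => g (s, x)) (F' := fun s x => g1 (s, x)) (x₀ := t) (a := a) (b := b)
    (bound := fun _ => M) (μ := volume) (s := ball t 1) (ball_mem_nhds t one_pos)
    (Filter.Eventually.of_forall fun s =>
      (hg.comp (continuous_const.prodMk continuous_id)).aestronglyMeasurable)
    ((hg.comp (continuous_const.prodMk continuous_id)).intervalIntegrable a b)
    ((hg1.comp (continuous_const.prodMk continuous_id)).aestronglyMeasurable)
    (Filter.Eventually.of_forall fun x hx s hs =>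
      hM (s, x) ⟨ball_subset_closedBall hs, uIoc_subset_uIcc hx⟩)
    (intervalIntegrable_const)
    (Filter.Eventually.of_forall fun x _ s _ => hd (s, x))
  exact H.2

private lemma cs_int {g : ℝ → ℝ} (hg : Continuous g) {a b : ℝ} (hab : a ≤ b) :
    (∫ x in a..b, |g x|) ≤ Real.sqrt (b - a) * Real.sqrt (∫ x in a..b, (g x)^2) := by
  set S := ∫ x in a..b, (g x)^2 with hS
  have hS0 : 0 ≤ S := intervalIntegral.integral_nonneg hab (fun x _ => sq_nonneg _)
  have key : ∀ c > (0:ℝ), (∫ x in a..b, |g x|) ≤ S / (2*c) + c * (b - a) / 2 := by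
    intro c hc
    have h1 : (∫ x in a..b, |g x|) ≤ ∫ x in a..b, ((g x)^2 / (2*c) + c/2) := by
      apply intervalIntegral.integral_mono_on hab (hg.abs.intervalIntegrable a b)
        (((hg.pow 2).div_const _).add continuous_const |>.intervalIntegrable a b)
      intro x _
      show |g x| ≤ (g x)^2 / (2*c) + c/2
      rw [div_add_div _ _ (by positivity) (two_ne_zero), le_div_iff₀ (by positivity)]
      nlinarith [sq_nonneg (|g x| - c), sq_abs (g x)]
    calc (∫ x in a..b, |g x|) ≤ _ := h1
      _ = S / (2*c) + c * (b-a) / 2 := by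
        rw [intervalIntegral.integral_add (f := fun x => g x ^ 2 / (2*c)) (g := fun _ => c/2) (((hg.pow 2).div_const _).intervalIntegrable a b)
          (continuous_const.intervalIntegrable a b)]
        rw [intervalIntegral.integral_div, intervalIntegral.integral_const]
        rw [hS]; simp [smul_eq_mul]; ring
  rcases eq_or_lt_of_le hab with rfl | hab'
  · simp
  have hba : (0:ℝ) < b - a := sub_pos.2 hab'
  rcases eq_or_lt_of_le hS0 with hS0' | hSpos
  · have h0 : (∫ x in a..b, |g x|) ≤ 0 := by
      apply le_of_forall_pos_le_add
      intro η hη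
      have hkey := key (2*η/(b-a)) (by positivity)
      rw [← hS0'] at hkey
      have heq : (0:ℝ)/(2*(2*η/(b-a))) + (2*η/(b-a)) * (b-a)/2 = 0 + η := by
        field_simp
        ring
      linarith [hkey, heq.symm.le]
    have : (0:ℝ) ≤ Real.sqrt (b-a) * Real.sqrt S := by positivity
    linarith
  · set u := Real.sqrt S with hu
    set v := Real.sqrt (b - a) with hv
    have hupos : 0 < u := Real.sqrt_pos.2 hSpos
    have hvpos : 0 < v := Real.sqrt_pos.2 hba
    have hc : (0:ℝ) < u / v := by positivity
    have hSu : S = u^2 := (Real.sq_sqrt hS0).symm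
    have hbav : b - a = v^2 := (Real.sq_sqrt hba.le).symm
    calc (∫ x in a..b, |g x|) ≤ S/(2*(u/v)) + (u/v)*(b-a)/2 := key _ hc
      _ = v * u := by rw [hSu, hbav]; field_simp; ring

/-- Let `e : [0,T] × [a,b] → ℝ` be `C²` with zero initial data, zero
boundary data, and `ρ ë = 𝔽 e_{xx} + F` with `|F| ≤ C₃ ε`. Then the energy
`E(t) = (1/2)∫ ρ|ė|² + (1/2)∫ 𝔽|e_x|²` satisfies `E'(t) = ∫ F ė ≤ C₃ ε √(b-a) √(2E/ρ)`,
and by Gronwall `sup_{t∈[0,T]} E(t) ≤ C₂ ε²` with `C₂` depending only on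
`C₃, ρ, |D| = b - a, T`. -/
theorem stmt_16 (ρ Fc a b T C₃ : ℝ) (hρ : 0 < ρ) (hFc : 0 < Fc) (hab : a < b)
    (hT : 0 ≤ T) (hC₃ : 0 ≤ C₃) :
    ∃ C₂ > 0, ∀ ε > 0, ∀ e F : ℝ → ℝ → ℝ,
      ContDiff ℝ 2 (fun p : ℝ × ℝ => e p.1 p.2) →
      Continuous (fun p : ℝ × ℝ => F p.1 p.2) →
      (∀ t ∈ Set.Icc 0 T, ∀ x ∈ Set.Icc a b,
        ρ * deriv (deriv (fun s => e s x)) t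
          = Fc * deriv (deriv (fun y => e t y)) x + F t x) →
      (∀ x ∈ Set.Icc a b, e 0 x = 0) →
      (∀ x ∈ Set.Icc a b, deriv (fun s => e s x) 0 = 0) →
      (∀ t ∈ Set.Icc 0 T, e t a = 0 ∧ e t b = 0) →
      (∀ t ∈ Set.Icc 0 T, ∀ x ∈ Set.Icc a b, |F t x| ≤ C₃ * ε) →
      ∀ t ∈ Set.Icc 0 T,
        (HasDerivAt
          (fun s => (1 / 2) * (∫ x in a..b, ρ * (deriv (fun r => e r x) s) ^ 2)
            + (1 / 2) * (∫ x in a..b, Fc * (deriv (fun y => e s y) x) ^ 2))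
          (∫ x in a..b, F t x * deriv (fun r => e r x) t) t) ∧
        ((∫ x in a..b, F t x * deriv (fun r => e r x) t)
          ≤ C₃ * ε * Real.sqrt (b - a) *
            Real.sqrt (2 * ((1 / 2) * (∫ x in a..b, ρ * (deriv (fun r => e r x) t) ^ 2)
              + (1 / 2) * (∫ x in a..b, Fc * (deriv (fun y => e t y) x) ^ 2)) / ρ)) ∧
        ((1 / 2) * (∫ x in a..b, ρ * (deriv (fun r => e r x) t) ^ 2)
            + (1 / 2) * (∫ x in a..b, Fc * (deriv (fun y => e t y) x) ^ 2)
          ≤ C₂ * ε ^ 2) := by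
  have hC₂pos : (0:ℝ) < C₃^2 * (b - a) * T^2 / (2*ρ) + 1 := by
    have h1 : (0:ℝ) ≤ C₃^2 * (b - a) * T^2 :=
      mul_nonneg (mul_nonneg (sq_nonneg _) (by linarith)) (sq_nonneg _)
    have h2 : (0:ℝ) ≤ C₃^2 * (b - a) * T^2 / (2*ρ) := div_nonneg h1 (by linarith)
    linarith
  refine ⟨C₃^2 * (b - a) * T^2 / (2*ρ) + 1, hC₂pos, ?_⟩
  intro ε hε e F hC2 hFcont hPDE h0 hv0 hbc hFb
  -- setup
  set E2 : ℝ × ℝ → ℝ := fun p => e p.1 p.2 with hE2def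
  have hdiff : Differentiable ℝ E2 := hC2.differentiable (by norm_num)
  set P1 : ℝ × ℝ → ℝ := fun p => fderiv ℝ E2 p (1, 0) with hP1def
  set P2 : ℝ × ℝ → ℝ := fun p => fderiv ℝ E2 p (0, 1) with hP2def
  have hfd : ContDiff ℝ 1 (fderiv ℝ E2) := hC2.fderiv_right (m := 1) (by norm_num)
  have hP1C : ContDiff ℝ 1 P1 :=
    (ContinuousLinearMap.apply ℝ ℝ ((1:ℝ),(0:ℝ))).contDiff.comp hfd
  have hP2C : ContDiff ℝ 1 P2 :=
    (ContinuousLinearMap.apply ℝ ℝ ((0:ℝ),(1:ℝ))).contDiff.comp hfd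
  have hP1d : Differentiable ℝ P1 := hP1C.differentiable one_ne_zero
  have hP2d : Differentiable ℝ P2 := hP2C.differentiable one_ne_zero
  have hP1c : Continuous P1 := hP1C.continuous
  have hP2c : Continuous P2 := hP2C.continuous
  set Q11 : ℝ × ℝ → ℝ := fun p => fderiv ℝ P1 p (1, 0) with hQ11def
  set Q12 : ℝ × ℝ → ℝ := fun p => fderiv ℝ P1 p (0, 1) with hQ12def
  set Q21 : ℝ × ℝ → ℝ := fun p => fderiv ℝ P2 p (1, 0) with hQ21def
  set Q22 : ℝ × ℝ → ℝ := fun p => fderiv ℝ P2 p (0, 1) with hQ22def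
  have hQ11c : Continuous Q11 :=
    (hP1C.continuous_fderiv one_ne_zero).clm_apply continuous_const
  have hQ21c : Continuous Q21 :=
    (hP2C.continuous_fderiv one_ne_zero).clm_apply continuous_const
  have hQ22c : Continuous Q22 :=
    (hP2C.continuous_fderiv one_ne_zero).clm_apply continuous_const
  have hsymm : ∀ p : ℝ × ℝ, Q12 p = Q21 p := by
    intro p
    have hs : IsSymmSndFDerivAt ℝ E2 p := (hC2.contDiffAt).isSymmSndFDerivAt (by norm_num)
    have hP1f : fderiv ℝ P1 p ((0:ℝ),(1:ℝ))
        = fderiv ℝ (fderiv ℝ E2) p ((0:ℝ),(1:ℝ)) ((1:ℝ),(0:ℝ)) := by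
      have h : HasFDerivAt P1
          (((ContinuousLinearMap.apply ℝ ℝ ((1:ℝ),(0:ℝ)))).comp (fderiv ℝ (fderiv ℝ E2) p)) p :=
        (ContinuousLinearMap.apply ℝ ℝ ((1:ℝ),(0:ℝ))).hasFDerivAt.comp p
          ((hfd.differentiable one_ne_zero) p).hasFDerivAt
      rw [h.fderiv]; rfl
    have hP2f : fderiv ℝ P2 p ((1:ℝ),(0:ℝ))
        = fderiv ℝ (fderiv ℝ E2) p ((1:ℝ),(0:ℝ)) ((0:ℝ),(1:ℝ)) := by
      have h : HasFDerivAt P2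
          (((ContinuousLinearMap.apply ℝ ℝ ((0:ℝ),(1:ℝ)))).comp (fderiv ℝ (fderiv ℝ E2) p)) p :=
        (ContinuousLinearMap.apply ℝ ℝ ((0:ℝ),(1:ℝ))).hasFDerivAt.comp p
          ((hfd.differentiable one_ne_zero) p).hasFDerivAt
      rw [h.fderiv]; rfl
    rw [hQ12def, hQ21def]
    simp only []
    rw [hP1f, hP2f, hs ((0:ℝ),(1:ℝ)) ((1:ℝ),(0:ℝ))]
  -- slice derivatives
  have hd1 : ∀ t x : ℝ, HasDerivAt (fun s => e s x) (P1 (t, x)) t := fun t x => slice_t hdiff t x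
  have hd2 : ∀ t x : ℝ, HasDerivAt (fun y => e t y) (P2 (t, x)) x := fun t x => slice_x hdiff t x
  have hP1t : ∀ t x : ℝ, HasDerivAt (fun s => P1 (s, x)) (Q11 (t, x)) t :=
    fun t x => slice_t hP1d t x
  have hP1x : ∀ t x : ℝ, HasDerivAt (fun y => P1 (t, y)) (Q12 (t, x)) x :=
    fun t x => slice_x hP1d t x
  have hP2t : ∀ t x : ℝ, HasDerivAt (fun s => P2 (s, x)) (Q21 (t, x)) t :=
    fun t x => slice_t hP2d t x
  have hP2x : ∀ t x : ℝ, HasDerivAt (fun y => P2 (t, y)) (Q22 (t, x)) x :=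
    fun t x => slice_x hP2d t x
  have hderiv1 : ∀ t x : ℝ, deriv (fun s => e s x) t = P1 (t, x) := fun t x => (hd1 t x).deriv
  have hderiv2 : ∀ t x : ℝ, deriv (fun y => e t y) x = P2 (t, x) := fun t x => (hd2 t x).deriv
  have hderiv11 : ∀ t x : ℝ, deriv (deriv (fun s => e s x)) t = Q11 (t, x) := by
    intro t x
    have hfun : deriv (fun s => e s x) = fun s => P1 (s, x) := funext fun s => hderiv1 s x
    rw [hfun]; exact (hP1t t x).deriv
  have hderiv22 : ∀ t x : ℝ, deriv (deriv (fun y => e t y)) x = Q22 (t, x) := by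
    intro t x
    have hfun : deriv (fun y => e t y) = fun y => P2 (t, y) := funext fun y => hderiv2 t y
    rw [hfun]; exact (hP2x t x).deriv
  -- PDE in P/Q form
  have hPDE' : ∀ r ∈ Set.Icc 0 T, ∀ x ∈ Set.Icc a b,
      ρ * Q11 (r, x) = Fc * Q22 (r, x) + F r x := by
    intro r hr x hx
    have := hPDE r hr x hx
    rwa [hderiv11, hderiv22] at this
  -- boundary velocities vanish
  have hvel : ∀ r ∈ Set.Icc 0 T, P1 (r, a) = 0 ∧ P1 (r, b) = 0 := by
    intro r hr
    constructor
    · rcases eq_or_lt_of_le hr.1 with h0r | h0r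
      · rw [← h0r]
        rw [← hderiv1 0 a]
        exact hv0 a ⟨le_rfl, hab.le⟩
      · exact hd_eq_zero_left (hd1 r a) h0r
          (fun s hs => (hbc s ⟨hs.1, hs.2.trans hr.2⟩).1)
    · rcases eq_or_lt_of_le hr.1 with h0r | h0r
      · rw [← h0r]
        rw [← hderiv1 0 b]
        exact hv0 b ⟨hab.le, le_rfl⟩
      · exact hd_eq_zero_left (hd1 r b) h0r
          (fun s hs => (hbc s ⟨hs.1, hs.2.trans hr.2⟩).2)
  -- initial data
  have hP1_0 : ∀ x ∈ Set.Icc a b, P1 (0, x) = 0 := by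
    intro x hx
    rw [← hderiv1 0 x]; exact hv0 x hx
  have hP2_0 : ∀ x ∈ Set.Icc a b, P2 (0, x) = 0 := by
    intro x hx
    rcases eq_or_lt_of_le hx.1 with hax | hax
    · exact hd_eq_zero_right (hd2 0 x) (hax ▸ hab)
        (fun y hy => h0 y ⟨hx.1.trans hy.1, hy.2⟩)
    · exact hd_eq_zero_left (hd2 0 x) hax (fun y hy => h0 y ⟨hy.1, hy.2.trans hx.2⟩)
  -- the energy function
  set K : ℝ → ℝ := fun s => (1 / 2) * (∫ x in a..b, ρ * (P1 (s, x)) ^ 2)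
      + (1 / 2) * (∫ x in a..b, Fc * (P2 (s, x)) ^ 2) with hKdef
  have hKnonneg : ∀ s : ℝ, 0 ≤ K s := by
    intro s
    have h1 : 0 ≤ ∫ x in a..b, ρ * (P1 (s, x)) ^ 2 :=
      intervalIntegral.integral_nonneg hab.le (fun x _ => by positivity)
    have h2 : 0 ≤ ∫ x in a..b, Fc * (P2 (s, x)) ^ 2 :=
      intervalIntegral.integral_nonneg hab.le (fun x _ => by positivity)
    simp only [hKdef]; positivity
  have hK0 : K 0 = 0 := by
    simp only [hKdef]
    have h1 : (∫ x in a..b, ρ * (P1 (0, x)) ^ 2) = 0 := by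
      rw [show (∫ x in a..b, ρ * (P1 (0, x)) ^ 2) = ∫ x in a..b, (0:ℝ) from
        intervalIntegral.integral_congr (fun x hx => by
          rw [hP1_0 x (by rwa [Set.uIcc_of_le hab.le] at hx)]; ring)]
      simp
    have h2 : (∫ x in a..b, Fc * (P2 (0, x)) ^ 2) = 0 := by
      rw [show (∫ x in a..b, Fc * (P2 (0, x)) ^ 2) = ∫ x in a..b, (0:ℝ) from
        intervalIntegral.integral_congr (fun x hx => by
          rw [hP2_0 x (by rwa [Set.uIcc_of_le hab.le] at hx)]; ring)]
      simp
    rw [h1, h2]; ring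
  -- derivative of the energy
  have keyD : ∀ r ∈ Set.Icc 0 T, HasDerivAt K (∫ x in a..b, F r x * P1 (r, x)) r := by
    intro r hr
    have legA : HasDerivAt (fun s => ∫ x in a..b, ρ * (P1 (s, x)) ^ 2)
        (∫ x in a..b, ρ * (2 * P1 (r, x) ^ 1 * Q11 (r, x))) r := by
      apply leibniz (g := fun p => ρ * (P1 p) ^ 2) (g1 := fun p => ρ * (2 * P1 p ^ 1 * Q11 p))
        (continuous_const.mul (hP1c.pow 2))
        (continuous_const.mul ((continuous_const.mul (hP1c.pow 1)).mul hQ11c))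
      intro p
      exact ((hP1t p.1 p.2).pow 2).const_mul ρ
    have legB : HasDerivAt (fun s => ∫ x in a..b, Fc * (P2 (s, x)) ^ 2)
        (∫ x in a..b, Fc * (2 * P2 (r, x) ^ 1 * Q21 (r, x))) r := by
      apply leibniz (g := fun p => Fc * (P2 p) ^ 2) (g1 := fun p => Fc * (2 * P2 p ^ 1 * Q21 p))
        (continuous_const.mul (hP2c.pow 2))
        (continuous_const.mul ((continuous_const.mul (hP2c.pow 1)).mul hQ21c))
      intro p
      exact ((hP2t p.1 p.2).pow 2).const_mul Fc
    have hsum := ((legA.const_mul (1/2:ℝ)).add (legB.const_mul (1/2:ℝ)))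
    have hDeq : (1/2:ℝ) * (∫ x in a..b, ρ * (2 * P1 (r, x) ^ 1 * Q11 (r, x)))
        + (1/2:ℝ) * (∫ x in a..b, Fc * (2 * P2 (r, x) ^ 1 * Q21 (r, x)))
        = ∫ x in a..b, F r x * P1 (r, x) := by
      have e1 : (∫ x in a..b, ρ * (2 * P1 (r, x) ^ 1 * Q11 (r, x)))
          = ∫ x in a..b, 2 * (ρ * P1 (r, x) * Q11 (r, x)) :=
        intervalIntegral.integral_congr (fun x _ => by ring)
      have e2 : (∫ x in a..b, Fc * (2 * P2 (r, x) ^ 1 * Q21 (r, x)))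
          = ∫ x in a..b, 2 * (Fc * P2 (r, x) * Q21 (r, x)) :=
        intervalIntegral.integral_congr (fun x _ => by ring)
      rw [e1, e2, intervalIntegral.integral_const_mul, intervalIntegral.integral_const_mul]
      have hint1 : IntervalIntegrable (fun x => ρ * P1 (r, x) * Q11 (r, x)) volume a b := by
        apply Continuous.intervalIntegrable
        exact ((continuous_const.mul (hP1c.comp (continuous_const.prodMk continuous_id))).mul
          (hQ11c.comp (continuous_const.prodMk continuous_id)))
      have hint2 : IntervalIntegrable (fun x => Fc * P2 (r, x) * Q21 (r, x)) volume a b := by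
        apply Continuous.intervalIntegrable
        exact ((continuous_const.mul (hP2c.comp (continuous_const.prodMk continuous_id))).mul
          (hQ21c.comp (continuous_const.prodMk continuous_id)))
      have hcomb : (∫ x in a..b, ρ * P1 (r, x) * Q11 (r, x))
          + (∫ x in a..b, Fc * P2 (r, x) * Q21 (r, x))
          = ∫ x in a..b, (ρ * P1 (r, x) * Q11 (r, x) + Fc * P2 (r, x) * Q21 (r, x)) :=
        (intervalIntegral.integral_add hint1 hint2).symm
      -- FTC for the cross term
      have hftc : (∫ x in a..b, Fc * (Q22 (r, x) * P1 (r, x) + P2 (r, x) * Q12 (r, x)))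
          = Fc * (P2 (r, b) * P1 (r, b)) - Fc * (P2 (r, a) * P1 (r, a)) := by
        apply intervalIntegral.integral_eq_sub_of_hasDerivAt
          (f := fun x => Fc * (P2 (r, x) * P1 (r, x)))
        · intro x _
          exact ((hP2x r x).mul (hP1x r x)).const_mul Fc
        · apply Continuous.intervalIntegrable
          apply continuous_const.mul
          apply Continuous.add
          · exact (hQ22c.comp (continuous_const.prodMk continuous_id)).mul
              (hP1c.comp (continuous_const.prodMk continuous_id))
          · exact (hP2c.comp (continuous_const.prodMk continuous_id)).mul
              ((hP1C.continuous_fderiv one_ne_zero).clm_apply continuous_const|>.comp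
                (continuous_const.prodMk continuous_id))
      rw [(hvel r hr).1, (hvel r hr).2] at hftc
      simp only [mul_zero, zero_mul, sub_zero] at hftc
      -- split the combined integrand using the PDE
      have hsplit : (∫ x in a..b, (ρ * P1 (r, x) * Q11 (r, x) + Fc * P2 (r, x) * Q21 (r, x)))
          = (∫ x in a..b, F r x * P1 (r, x))
            + ∫ x in a..b, Fc * (Q22 (r, x) * P1 (r, x) + P2 (r, x) * Q12 (r, x)) := by
        rw [← intervalIntegral.integral_add]
        · apply intervalIntegral.integral_congr
          intro x hx
          rw [Set.uIcc_of_le hab.le] at hx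
          have hp := hPDE' r hr x hx
          have hq := hsymm (r, x)
          linear_combination (P1 (r, x)) * hp - (Fc * P2 (r, x)) * hq
        · apply Continuous.intervalIntegrable
          exact ((hFcont.comp (continuous_const.prodMk continuous_id)).mul
            (hP1c.comp (continuous_const.prodMk continuous_id)))
        · apply Continuous.intervalIntegrable
          apply continuous_const.mul
          apply Continuous.add
          · exact (hQ22c.comp (continuous_const.prodMk continuous_id)).mul
              (hP1c.comp (continuous_const.prodMk continuous_id))
          · exact (hP2c.comp (continuous_const.prodMk continuous_id)).mul
              ((hP1C.continuous_fderiv one_ne_zero).clm_apply continuous_const|>.comp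
                (continuous_const.prodMk continuous_id))
      linarith [hcomb, hsplit, hftc]
    rw [hDeq] at hsum
    exact hsum
  -- the bound on the derivative
  have keyB : ∀ r ∈ Set.Icc 0 T, (∫ x in a..b, F r x * P1 (r, x))
      ≤ C₃ * ε * Real.sqrt (b - a) * Real.sqrt (2 * K r / ρ) := by
    intro r hr
    have hP1rc : Continuous (fun x => P1 (r, x)) :=
      hP1c.comp (continuous_const.prodMk continuous_id)
    have step1 : (∫ x in a..b, F r x * P1 (r, x)) ≤ ∫ x in a..b, C₃ * ε * |P1 (r, x)| := by
      apply intervalIntegral.integral_mono_on hab.le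
      · exact Continuous.intervalIntegrable
          ((hFcont.comp (continuous_const.prodMk continuous_id)).mul hP1rc) a b
      · exact (continuous_const.mul hP1rc.abs).intervalIntegrable a b
      · intro x hx
        calc F r x * P1 (r, x) ≤ |F r x * P1 (r, x)| := le_abs_self _
          _ = |F r x| * |P1 (r, x)| := abs_mul _ _
          _ ≤ C₃ * ε * |P1 (r, x)| :=
            mul_le_mul_of_nonneg_right (hFb r hr x hx) (abs_nonneg _)
    have step2 : (∫ x in a..b, C₃ * ε * |P1 (r, x)|)
        = C₃ * ε * ∫ x in a..b, |P1 (r, x)| := intervalIntegral.integral_const_mul _ _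
    have step3 := cs_int hP1rc hab.le
    have step4 : (∫ x in a..b, (P1 (r, x))^2) ≤ 2 * K r / ρ := by
      have h2 : 0 ≤ ∫ x in a..b, Fc * (P2 (r, x)) ^ 2 :=
        intervalIntegral.integral_nonneg hab.le (fun x _ => by positivity)
      have h1 : (∫ x in a..b, ρ * (P1 (r, x)) ^ 2) = ρ * ∫ x in a..b, (P1 (r, x)) ^ 2 :=
        intervalIntegral.integral_const_mul _ _
      have h2K : 2 * K r = (∫ x in a..b, ρ * (P1 (r, x)) ^ 2)
          + (∫ x in a..b, Fc * (P2 (r, x)) ^ 2) := by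
        simp only [hKdef]; ring
      rw [le_div_iff₀ hρ]
      linarith [h1.symm.le, h1.le, h2]
    have step5 : Real.sqrt (∫ x in a..b, (P1 (r, x))^2) ≤ Real.sqrt (2 * K r / ρ) :=
      Real.sqrt_le_sqrt step4
    calc (∫ x in a..b, F r x * P1 (r, x)) ≤ ∫ x in a..b, C₃ * ε * |P1 (r, x)| := step1
      _ = C₃ * ε * ∫ x in a..b, |P1 (r, x)| := step2
      _ ≤ C₃ * ε * (Real.sqrt (b - a) * Real.sqrt (∫ x in a..b, (P1 (r, x))^2)) := by
          apply mul_le_mul_of_nonneg_left step3 (by positivity)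
      _ ≤ C₃ * ε * (Real.sqrt (b - a) * Real.sqrt (2 * K r / ρ)) := by
          apply mul_le_mul_of_nonneg_left _ (by positivity)
          exact mul_le_mul_of_nonneg_left step5 (Real.sqrt_nonneg _)
      _ = C₃ * ε * Real.sqrt (b - a) * Real.sqrt (2 * K r / ρ) := by ring
  -- Gronwall
  have keyG : ∀ r ∈ Set.Icc 0 T, K r ≤ (C₃^2 * (b - a) * T^2 / (2*ρ) + 1) * ε ^ 2 := by
    intro r hr
    set M : ℝ := C₃ * ε * Real.sqrt (b - a) * Real.sqrt (2 / ρ) / 2 with hMdef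
    have hM0 : 0 ≤ M := by rw [hMdef]; positivity
    -- key estimate: K r ≤ M^2 r^2 + small
    have main : ∀ δ > (0:ℝ), K r ≤ (M * r + Real.sqrt δ)^2 := by
      intro δ hδ
      set G : ℝ → ℝ := fun s => M * s - Real.sqrt (K s + δ) with hGdef
      have hGd : ∀ s ∈ Set.Icc 0 T, HasDerivAt G
          (M - (∫ x in a..b, F s x * P1 (s, x)) / (2 * Real.sqrt (K s + δ))) s := by
        intro s hs
        have hpos : 0 < K s + δ := by linarith [hKnonneg s]
        have h1 : HasDerivAt (fun u => K u + δ) (∫ x in a..b, F s x * P1 (s, x)) s :=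
          (keyD s hs).add_const δ
        have h2 : HasDerivAt (fun u => Real.sqrt (K u + δ))
            (1 / (2 * Real.sqrt (K s + δ)) * (∫ x in a..b, F s x * P1 (s, x))) s :=
          (Real.hasDerivAt_sqrt hpos.ne').comp s h1
        have h3 : HasDerivAt (fun u => M * u) M s := by
          simpa using (hasDerivAt_id s).const_mul M
        have := h3.sub h2
        exact this.congr_deriv (by ring)
      have hGmono : MonotoneOn G (Set.Icc 0 T) := by
        apply monotoneOn_of_deriv_nonneg (convex_Icc 0 T)
        · intro s hs
          exact ((hGd s hs).continuousAt).continuousWithinAt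
        · intro s hs
          rw [interior_Icc] at hs
          exact ((hGd s (Set.mem_Icc_of_Ioo hs)).differentiableAt).differentiableWithinAt
        · intro s hs
          rw [interior_Icc] at hs
          have hs' : s ∈ Set.Icc 0 T := Set.mem_Icc_of_Ioo hs
          rw [(hGd s hs').deriv]
          have hpos : 0 < K s + δ := by linarith [hKnonneg s]
          have hsqpos : 0 < Real.sqrt (K s + δ) := Real.sqrt_pos.2 hpos
          have hb1 : (∫ x in a..b, F s x * P1 (s, x))
              ≤ C₃ * ε * Real.sqrt (b - a) * Real.sqrt (2 * K s / ρ) := keyB s hs'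
          have hb2 : Real.sqrt (2 * K s / ρ) ≤ Real.sqrt (2/ρ) * Real.sqrt (K s + δ) := by
            rw [← Real.sqrt_mul (by positivity) (K s + δ)]
            apply Real.sqrt_le_sqrt
            have heq : 2/ρ * (K s + δ) = 2 * (K s + δ) / ρ := by ring
            rw [heq]
            gcongr
            linarith
          have hb3 : (∫ x in a..b, F s x * P1 (s, x))
              ≤ C₃ * ε * Real.sqrt (b - a) * (Real.sqrt (2/ρ) * Real.sqrt (K s + δ)) := by
            calc (∫ x in a..b, F s x * P1 (s, x)) ≤ _ := hb1
              _ ≤ _ := mul_le_mul_of_nonneg_left hb2 (by positivity)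
          rw [sub_nonneg, div_le_iff₀ (by positivity)]
          calc (∫ x in a..b, F s x * P1 (s, x))
              ≤ C₃ * ε * Real.sqrt (b - a) * (Real.sqrt (2/ρ) * Real.sqrt (K s + δ)) := hb3
            _ = M * (2 * Real.sqrt (K s + δ)) := by rw [hMdef]; ring
      have h0T : (0:ℝ) ∈ Set.Icc 0 T := ⟨le_rfl, hT⟩
      have hmono := hGmono h0T hr hr.1
      rw [hGdef] at hmono
      simp only [mul_zero, zero_sub, hK0, zero_add] at hmono
      -- hmono : -√δ ≤ M r - √(K r + δ)
      have hsq : Real.sqrt (K r + δ) ≤ M * r + Real.sqrt δ := by linarith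
      have hKrδ : K r + δ ≤ (M * r + Real.sqrt δ)^2 := by
        have := Real.sq_sqrt (by linarith [hKnonneg r] : 0 ≤ K r + δ)
        nlinarith [Real.sqrt_nonneg (K r + δ)]
      linarith
    -- let δ → 0
    have hKM : K r ≤ M^2 * r^2 := by
      apply le_of_forall_pos_le_add
      intro η hη
      have hr0 : 0 ≤ r := hr.1
      have hden : 0 < 2 * M * r + 1 := by positivity
      set w : ℝ := min 1 (η / (2 * M * r + 1)) with hwdef
      have hwpos : 0 < w := lt_min one_pos (by positivity)
      have hw1 : w ≤ 1 := min_le_left _ _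
      have hw2 : w ≤ η / (2 * M * r + 1) := min_le_right _ _
      have hmain := main (w^2) (by positivity)
      rw [Real.sqrt_sq hwpos.le] at hmain
      have hexp : (M * r + w)^2 = M^2 * r^2 + 2*M*r*w + w^2 := by ring
      rw [hexp] at hmain
      have hwsq : w^2 ≤ w := by nlinarith
      have hw3 : (2 * M * r + 1) * w ≤ η := by
        rw [← le_div_iff₀' hden]
        exact hw2
      linarith [hmain, hwsq, hw3]
    have hMsq : M^2 = C₃^2 * ε^2 * (b - a) * (2/ρ) / 4 := by
      rw [hMdef]
      rw [div_pow, mul_pow, mul_pow, mul_pow, Real.sq_sqrt (by linarith : (0:ℝ) ≤ b - a),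
        Real.sq_sqrt (by positivity : (0:ℝ) ≤ 2/ρ)]
      ring
    have hr2 : r^2 ≤ T^2 := by nlinarith [hr.1, hr.2]
    have hMT : M^2 * r^2 ≤ M^2 * T^2 := by nlinarith [sq_nonneg M]
    calc K r ≤ M^2 * r^2 := hKM
      _ ≤ M^2 * T^2 := hMT
      _ = C₃^2 * (b - a) * T^2/(2*ρ) * ε^2 := by rw [hMsq]; ring
      _ ≤ (C₃^2 * (b - a) * T^2/(2*ρ) + 1) * ε^2 := by nlinarith [sq_nonneg ε]
  -- conclude
  intro t ht
  simp only [hderiv1, hderiv2]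
  refine ⟨keyD t ht, keyB t ht, keyG t ht⟩
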